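/- Let M = {(x, y, eˣ cos y, −eˣ sin y) : (x, y) ∈ ℝ²} ⊆ ℝ⁴ (the graph of the gradient of the harmonic function φ(x,y) = eˣ cos y, a special Lagrangian and hence minimal surface). Then for every r ≥ e, the 2-dimensional Hausdorff measure satisfies ℋ²(M ∩ B̄(0, √3·r)) ≥ r(r² − 1), where B̄(0, √3·r) is the closed ball in ℝ⁴ of radius √3·r centered at the origin. In particular, M has volume growth strictly faster than Euclidean (quadratic) growth. -/

import Mathlib

open MeasureTheory Metric

noncomputable section

/-- The special Lagrangian surface `M = {(x, y, eˣ cos y, −eˣ sin y)} ⊆ ℝ⁴`, the graph of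
the gradient of the harmonic function `φ(x,y) = eˣ cos y`. -/
def expGraph : Set (EuclideanSpace ℝ (Fin 4)) :=
  {p | ∃ x y : ℝ, p = (WithLp.equiv 2 (Fin 4 → ℝ)).symm
    ![x, y, Real.exp x * Real.cos y, -(Real.exp x * Real.sin y)]}

set_option maxHeartbeats 1000000

section Aux

open Set Real

/-- The graph parametrization of `expGraph`. -/
def expG : ℝ × ℝ → EuclideanSpace ℝ (Fin 4) := fun q =>
  (WithLp.equiv 2 (Fin 4 → ℝ)).symm
    ![q.1, q.2, Real.exp q.1 * Real.cos q.2, -(Real.exp q.1 * Real.sin q.2)]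

lemma continuous_expG : Continuous expG := by
  apply Continuous.comp
  · exact PiLp.continuous_toLp 2 (fun _ : Fin 4 => ℝ)
  · apply continuous_pi
    intro i
    fin_cases i <;> simp <;> fun_prop

/-- A rotation in the last two coordinates followed by projection onto them;
a `1`-Lipschitz map from `ℝ⁴` to `ℝ²` (the latter with the sup metric). -/
def rotProj (c : ℝ) : EuclideanSpace ℝ (Fin 4) → (Fin 2 → ℝ) := fun p =>
  ![Real.cos c * p 2 - Real.sin c * p 3, Real.sin c * p 2 + Real.cos c * p 3]

lemma lipschitz_rotProj (c : ℝ) : LipschitzWith 1 (rotProj c) := by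
  apply LipschitzWith.of_dist_le_mul
  intro p q
  rw [NNReal.coe_one, one_mul]
  have hd : dist p q = Real.sqrt (∑ i, (p i - q i) ^ 2) := by
    rw [EuclideanSpace.dist_eq]
    congr 1
    exact Finset.sum_congr rfl fun i _ => by rw [Real.dist_eq, sq_abs]
  have key : ∀ a b : ℝ, a ^ 2 + b ^ 2 = 1 →
      |a * (p 2 - q 2) + b * (p 3 - q 3)| ≤ dist p q := by
    intro a b hab
    rw [hd, ← Real.sqrt_sq_eq_abs]
    apply Real.sqrt_le_sqrt
    rw [Fin.sum_univ_four]
    nlinarith [sq_nonneg (b * (p 2 - q 2) - a * (p 3 - q 3)), sq_nonneg (p 0 - q 0),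
      sq_nonneg (p 1 - q 1)]
  rw [dist_pi_le_iff dist_nonneg]
  intro i
  fin_cases i
  · have h := key (Real.cos c) (-Real.sin c) (by nlinarith [Real.sin_sq_add_cos_sq c])
    simp only [rotProj, Real.dist_eq, Fin.zero_eta, Matrix.cons_val_zero]
    convert h using 2
    ring
  · have h := key (Real.sin c) (Real.cos c) (Real.sin_sq_add_cos_sq c)
    simp only [rotProj, Real.dist_eq, Fin.mk_one, Matrix.cons_val_one, Matrix.head_cons, Matrix.cons_val_zero]
    convert h using 2
    ring

/-- Area of the (open) annular sector of radii `1 < ρ < r` and angle `1`. -/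
lemma sector_volume {r : ℝ} (hr : 1 ≤ r) :
    volume (polarCoord.symm '' (Ioo 1 r ×ˢ Ioo (-(1/2)) (1/2)))
      = ENNReal.ofReal ((r ^ 2 - 1) / 2) := by
  set s : Set (ℝ × ℝ) := Ioo 1 r ×ˢ Ioo (-(1/2)) (1/2) with hs
  have hmeas : MeasurableSet s := measurableSet_Ioo.prod measurableSet_Ioo
  set B : ℝ × ℝ → ℝ × ℝ →L[ℝ] ℝ × ℝ := fun p =>
    LinearMap.toContinuousLinearMap (Matrix.toLin (Module.Basis.finTwoProd ℝ) (Module.Basis.finTwoProd ℝ)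
      !![Real.cos p.2, -p.1 * Real.sin p.2; Real.sin p.2, p.1 * Real.cos p.2]) with hB
  have B_det : ∀ p : ℝ × ℝ, (B p).det = p.1 := by
    intro p
    conv_rhs => rw [← one_mul p.1, ← Real.cos_sq_add_sin_sq p.2]
    simp only [hB, neg_mul, LinearMap.det_toContinuousLinearMap, LinearMap.det_toLin,
      Matrix.det_fin_two_of, sub_neg_eq_add]
    ring
  have hsub : s ⊆ polarCoord.target := by
    rintro ⟨ρ, θ⟩ ⟨h1, h2⟩
    constructor
    · exact lt_trans one_pos h1.1
    · constructor
      · linarith [h2.1, Real.pi_gt_three]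
      · linarith [h2.2, Real.pi_gt_three]
  have hinj : Set.InjOn polarCoord.symm s := by
    apply (polarCoord.symm.injOn).mono
    rwa [OpenPartialHomeomorph.symm_source]
  have hder : ∀ p ∈ s, HasFDerivWithinAt polarCoord.symm (B p) s p := fun p _ =>
    (hasFDerivAt_polarCoord_symm p).hasFDerivWithinAt
  have h1 : volume (polarCoord.symm '' s) = ∫⁻ p in s, ENNReal.ofReal |(B p).det| := by
    rw [← setLIntegral_one, lintegral_image_eq_lintegral_abs_det_fderiv_mul volume hmeas hder hinj]
    simp
  rw [h1]
  have h2 : ∫⁻ p in s, ENNReal.ofReal |(B p).det|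
      = ∫⁻ p in s, ENNReal.ofReal p.1 := by
    apply setLIntegral_congr_fun hmeas
    intro p hp
    dsimp only
    rw [B_det p, abs_of_pos (lt_trans one_pos hp.1.1)]
  rw [h2]
  rw [hs, Measure.volume_eq_prod, ← Measure.prod_restrict]
  rw [lintegral_prod _ (by fun_prop)]
  have hinner : ∀ x : ℝ, ∫⁻ y in Ioo (-(1/2) : ℝ) (1/2), ENNReal.ofReal x = ENNReal.ofReal x := by
    intro x
    rw [lintegral_const, Measure.restrict_apply MeasurableSet.univ, Set.univ_inter,
      Real.volume_Ioo]
    norm_num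
  calc ∫⁻ x in Ioo 1 r, ∫⁻ _y in Ioo (-(1/2) : ℝ) (1/2), ENNReal.ofReal x
      = ∫⁻ x in Ioo 1 r, ENNReal.ofReal x := by
        exact lintegral_congr fun x => hinner x
    _ = ENNReal.ofReal ((r ^ 2 - 1) / 2) := by
        rw [← ofReal_integral_eq_lintegral_ofReal]
        · congr 1
          rw [← integral_Ioc_eq_integral_Ioo, ← intervalIntegral.integral_of_le hr]
          simp [integral_id]
        · exact (continuous_id.integrableOn_Icc).mono_set Ioo_subset_Icc_self
        · filter_upwards [ae_restrict_mem measurableSet_Ioo] with x hx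
          simp only [Pi.zero_apply]
          linarith [hx.1]

lemma hausdorff_two_pi : (μH[2] : Measure (Fin 2 → ℝ)) = volume := by
  simpa using MeasureTheory.hausdorffMeasure_pi_real (ι := Fin 2)

/-- Each piece of the graph over `[0, log r] × [c - ½, c + ½]` has Hausdorff measure at least
the area of the annular sector of radii `1 ≤ ρ ≤ r` and angle `1`. -/
lemma piece_bound {r : ℝ} (hr : 1 ≤ r) (c : ℝ) :
    ENNReal.ofReal ((r ^ 2 - 1) / 2)
      ≤ μH[2] (expG '' (Icc 0 (Real.log r) ×ˢ Icc (c - 1/2) (c + 1/2))) := by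
  set Q : Set (ℝ × ℝ) := Icc (0:ℝ) (Real.log r) ×ˢ Icc (c - 1/2) (c + 1/2) with hQ
  set sec : Set (ℝ × ℝ) := polarCoord.symm '' (Ioo 1 r ×ˢ Ioo (-(1/2)) (1/2)) with hsec
  have hT : (MeasurableEquiv.finTwoArrow ⁻¹' sec : Set (Fin 2 → ℝ))
      ⊆ rotProj c '' (expG '' Q) := by
    intro v hv
    obtain ⟨⟨ρ, θ⟩, ⟨hρ, hθ⟩, hw⟩ := hv
    have hρ0 : (0:ℝ) < ρ := lt_trans one_pos hρ.1
    have hw0 : ρ * Real.cos θ = v 0 := congrArg Prod.fst hw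
    have hw1 : ρ * Real.sin θ = v 1 := congrArg Prod.snd hw
    refine ⟨expG (Real.log ρ, c - θ), ⟨(Real.log ρ, c - θ), ⟨?_, ?_⟩, rfl⟩, ?_⟩
    · exact ⟨Real.log_nonneg hρ.1.le, Real.log_le_log hρ0 hρ.2.le⟩
    · constructor
      · simp only [mem_Ioo] at hθ; linarith [hθ.2]
      · simp only [mem_Ioo] at hθ; linarith [hθ.1]
    · funext i
      have hexp : Real.exp (Real.log ρ) = ρ := Real.exp_log hρ0
      fin_cases i
      · show Real.cos c * expG (Real.log ρ, c - θ) 2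
            - Real.sin c * expG (Real.log ρ, c - θ) 3 = v 0
        show Real.cos c * (Real.exp (Real.log ρ) * Real.cos (c - θ))
            - Real.sin c * (-(Real.exp (Real.log ρ) * Real.sin (c - θ))) = v 0
        have h := Real.cos_sub c (c - θ)
        rw [sub_sub_cancel] at h
        rw [hexp, ← hw0, h]
        ring
      · show Real.sin c * expG (Real.log ρ, c - θ) 2
            + Real.cos c * expG (Real.log ρ, c - θ) 3 = v 1
        show Real.sin c * (Real.exp (Real.log ρ) * Real.cos (c - θ))
            + Real.cos c * (-(Real.exp (Real.log ρ) * Real.sin (c - θ))) = v 1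
        have h := Real.sin_sub c (c - θ)
        rw [sub_sub_cancel] at h
        rw [hexp, ← hw1, h]
        ring
  calc ENNReal.ofReal ((r ^ 2 - 1) / 2) = volume sec := (sector_volume hr).symm
    _ = volume (MeasurableEquiv.finTwoArrow ⁻¹' sec : Set (Fin 2 → ℝ)) :=
        ((volume_preserving_finTwoArrow ℝ).measure_preimage_equiv sec).symm
    _ = μH[2] (MeasurableEquiv.finTwoArrow ⁻¹' sec : Set (Fin 2 → ℝ)) := by
        rw [hausdorff_two_pi]
    _ ≤ μH[2] (rotProj c '' (expG '' Q)) := measure_mono hT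
    _ ≤ μH[2] (expG '' Q) := by
        simpa using (lipschitz_rotProj c).hausdorffMeasure_image_le (by norm_num : (0:ℝ) ≤ 2)
          (expG '' Q)

lemma arith_key {r x y ex E : ℝ} (hE : (2.7182818283:ℝ) < E) (hr0 : 0 < r)
    (hx0 : 0 ≤ x) (hxe : x * E ≤ r) (hy1 : -(27/20)*r ≤ y) (hy2 : y ≤ (27/20)*r)
    (hex0 : 0 < ex) (hex : ex ≤ r) : x^2 + y^2 + ex^2 ≤ 3 * r^2 := by
  have hE0 : (0:ℝ) < E := by linarith
  have h1 : 0 ≤ x * E := mul_nonneg hx0 hE0.le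
  have h2 : (x * E)^2 ≤ r^2 := by nlinarith
  have hE2 : (7:ℝ) ≤ E^2 := by nlinarith
  have h3 : 7 * x^2 ≤ (x * E)^2 := by
    have := mul_le_mul_of_nonneg_right hE2 (sq_nonneg x)
    nlinarith
  nlinarith [sq_nonneg y]

end Aux

/-- **Remark 3.3**: the minimal surface `M = graph of D(eˣ cos y)` in `ℝ⁴` satisfies
`ℋ²(M ∩ 𝐁_{√3 r}) ≥ r(r² − 1)` for every `r ≥ e`; in particular it has volume growth
strictly faster than Euclidean (quadratic) growth. -/
theorem expGraph_volume_growth :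
    ∀ r : ℝ, Real.exp 1 ≤ r →
      ENNReal.ofReal (r * (r ^ 2 - 1))
        ≤ μH[2] (expGraph ∩ closedBall (0 : EuclideanSpace ℝ (Fin 4)) (Real.sqrt 3 * r)) := by
  intro r hr
  have he : (2.7182818283:ℝ) < Real.exp 1 := Real.exp_one_gt_d9
  have hr2 : (2:ℝ) ≤ r := by linarith
  have hr1 : (1:ℝ) < r := by linarith
  have hr0 : (0:ℝ) < r := by linarith
  have hE0 : (0:ℝ) < Real.exp 1 := Real.exp_pos 1
  have hlog : Real.log r * Real.exp 1 ≤ r := by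
    have h0 : (0:ℝ) < r / Real.exp 1 := by positivity
    have h1 := Real.log_le_sub_one_of_pos h0
    rw [Real.log_div (by linarith) (Real.exp_ne_zero 1), Real.log_exp] at h1
    have h2 : Real.log r ≤ r / Real.exp 1 := by linarith
    calc Real.log r * Real.exp 1 ≤ (r / Real.exp 1) * Real.exp 1 :=
          mul_le_mul_of_nonneg_right h2 hE0.le
      _ = r := by field_simp
  have hlog0 : 0 ≤ Real.log r := Real.log_nonneg hr1.le
  set N := ⌈2 * r⌉₊ with hN
  have hN1 : 2 * r ≤ (N:ℝ) := Nat.le_ceil _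
  have hN2 : (N:ℝ) < 2 * r + 1 := Nat.ceil_lt_add_one (by positivity)
  set cc : ℕ → ℝ := fun j => -(27/20)*r + (11/10)*(j:ℝ) + 1/2 with hcc
  set S : ℕ → Set (EuclideanSpace ℝ (Fin 4)) := fun j =>
    expG '' (Set.Icc (0:ℝ) (Real.log r) ×ˢ Set.Icc (cc j - 1/2) (cc j + 1/2)) with hS
  have hSsub : ∀ j < N, S j ⊆ expGraph ∩ closedBall 0 (Real.sqrt 3 * r) := by
    intro j hj p hp
    obtain ⟨⟨x, y⟩, ⟨hx, hy⟩, rfl⟩ := hp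
    simp only [Set.mem_Icc] at hx hy
    constructor
    · exact ⟨x, y, rfl⟩
    · rw [mem_closedBall_zero_iff]
      have hnorm : ‖expG (x, y)‖ = Real.sqrt (x^2 + y^2 + Real.exp x ^ 2) := by
        rw [EuclideanSpace.norm_eq]
        congr 1
        rw [Fin.sum_univ_four]
        show ‖x‖^2 + ‖y‖^2 + ‖Real.exp x * Real.cos y‖^2 + ‖-(Real.exp x * Real.sin y)‖^2
            = x^2 + y^2 + Real.exp x ^ 2
        simp only [Real.norm_eq_abs, sq_abs, norm_neg]
        linear_combination (Real.exp x ^ 2) * (Real.sin_sq_add_cos_sq y)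
      rw [hnorm]
      have h3 : Real.sqrt 3 * r = Real.sqrt (3 * r^2) := by
        rw [Real.sqrt_mul (by norm_num), Real.sqrt_sq hr0.le]
      rw [h3]
      apply Real.sqrt_le_sqrt
      have hjN : (j:ℝ) ≤ (N:ℝ) - 1 := by
        have h5 : (j:ℕ) + 1 ≤ N := hj
        have h6 := Nat.cast_le (α := ℝ).mpr h5
        push_cast at h6 ⊢
        linarith
      have hj0 : (0:ℝ) ≤ (j:ℝ) := Nat.cast_nonneg j
      have hy1 : -(27/20)*r ≤ y := by
        have : cc j - 1/2 = -(27/20)*r + (11/10)*(j:ℝ) := by rw [hcc]; ring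
        nlinarith [hy.1]
      have hy2 : y ≤ (27/20)*r := by
        have h4 : cc j + 1/2 = -(27/20)*r + (11/10)*(j:ℝ) + 1 := by rw [hcc]; ring
        nlinarith [hy.2, hjN, hN2]
      have hxe : x * Real.exp 1 ≤ r := by
        calc x * Real.exp 1 ≤ Real.log r * Real.exp 1 :=
              mul_le_mul_of_nonneg_right hx.2 hE0.le
          _ ≤ r := hlog
      have hexpx : Real.exp x ≤ r := by
        calc Real.exp x ≤ Real.exp (Real.log r) := Real.exp_le_exp.mpr hx.2
          _ = r := Real.exp_log hr0
      have hexpx0 : (0:ℝ) < Real.exp x := Real.exp_pos x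
      exact arith_key he hr0 hx.1 hxe hy1 hy2 hexpx0 hexpx
  have hSdisj : (↑(Finset.range N) : Set ℕ).PairwiseDisjoint S := by
    intro j _ k _ hjk
    apply Set.disjoint_left.mpr
    rintro p ⟨⟨x, y⟩, ⟨_, hy⟩, rfl⟩ ⟨⟨x', y'⟩, ⟨_, hy'⟩, heq⟩
    have hyy : y' = y := congrArg (fun p : EuclideanSpace ℝ (Fin 4) => p 1) heq
    simp only [Set.mem_Icc] at hy hy'
    rw [hyy] at hy'
    rcases lt_or_gt_of_ne hjk with h | h
    · have : (j:ℝ) + 1 ≤ (k:ℝ) := by exact_mod_cast h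
      have e1 : cc j + 1/2 < cc k - 1/2 := by rw [hcc]; simp only; nlinarith
      linarith [hy.2, hy'.1]
    · have : (k:ℝ) + 1 ≤ (j:ℝ) := by exact_mod_cast h
      have e1 : cc k + 1/2 < cc j - 1/2 := by rw [hcc]; simp only; nlinarith
      linarith [hy.1, hy'.2]
  have hSmeas : ∀ j, MeasurableSet (S j) :=
    fun j => (((isCompact_Icc.prod isCompact_Icc).image continuous_expG).isClosed).measurableSet
  calc ENNReal.ofReal (r * (r ^ 2 - 1))
      = ENNReal.ofReal (2 * r) * ENNReal.ofReal ((r ^ 2 - 1) / 2) := by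
        rw [← ENNReal.ofReal_mul (by positivity)]
        congr 1; ring
    _ ≤ (N : ENNReal) * ENNReal.ofReal ((r ^ 2 - 1) / 2) := by
        apply mul_le_mul_left
        calc ENNReal.ofReal (2 * r) ≤ ENNReal.ofReal (N : ℝ) := ENNReal.ofReal_le_ofReal hN1
          _ = (N : ENNReal) := ENNReal.ofReal_natCast N
    _ = ∑ _j ∈ Finset.range N, ENNReal.ofReal ((r ^ 2 - 1) / 2) := by
        rw [Finset.sum_const, Finset.card_range, nsmul_eq_mul]
    _ ≤ ∑ j ∈ Finset.range N, μH[2] (S j) :=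
        Finset.sum_le_sum fun j _ => piece_bound hr1.le (cc j)
    _ = μH[2] (⋃ j ∈ Finset.range N, S j) :=
        (measure_biUnion_finset hSdisj (fun j _ => hSmeas j)).symm
    _ ≤ μH[2] (expGraph ∩ closedBall 0 (Real.sqrt 3 * r)) := by
        apply measure_mono
        apply Set.iUnion₂_subset
        intro j hj
        exact hSsub j (Finset.mem_range.mp hj)
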